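/- For every even integer p ≥ 2 there is a constant C_p > 0 with the following property. Let n, m ≥ 1, k ≥ 1, and B ≥ 1 be natural numbers, let A ∈ ℝ^{n×m} be a matrix with |A_{ij}| ≤ 2^B for all i, j, and let G ∈ ℝ^{n×m} be a matrix with rank(G) = k such that ‖A − G‖_p^p ≤ ‖A‖_p^p. Then there exist matrices X ∈ ℝ^{n×k} and Y ∈ ℝ^{m×k} with G = XY^⊤ such that max_{i,j} |X_{ij}| ≤ (n·m·k)^{C_p} · 2^{C_p·B} and max_{i,j} |Y_{ij}| ≤ (n·m·k)^{C_p} · 2^{C_p·B}. -/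

import Mathlib

open Matrix

/-- Entrywise `p`-th power sum: `‖M‖_p^p = ∑_{i,j} |M_{ij}|^p`. -/
def lpPow (p : ℕ) {n m : ℕ} (M : Matrix (Fin n) (Fin m) ℝ) : ℝ :=
  ∑ i, ∑ j, |M i j| ^ p

lemma exists_li_cols {a b k : ℕ} (M : Matrix (Fin a) (Fin b) ℝ) (hM : M.rank = k) :
    ∃ c : Fin k → Fin b, LinearIndependent ℝ (fun t => Mᵀ (c t)) := by
  obtain ⟨s, hst, hspan, hli⟩ := exists_linearIndependent ℝ (Set.range Mᵀ)
  have hsfin : s.Finite := (Set.finite_range Mᵀ).subset hst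
  haveI := hsfin.fintype
  have hcard : Fintype.card s = k := by
    have h1 : Module.finrank ℝ (Submodule.span ℝ s) = s.toFinset.card :=
      finrank_span_set_eq_card hli
    rw [hspan] at h1
    change Module.finrank ℝ (Submodule.span ℝ (Set.range M.col)) = _ at h1
    rw [← Matrix.rank_eq_finrank_span_cols, hM] at h1
    rw [← Set.toFinset_card, ← h1]
  set e : Fin k ≃ s := (Fintype.equivFinOfCardEq hcard).symm
  have hch : ∀ t : Fin k, ∃ j, Mᵀ j = (e t).1 := fun t => hst (e t).2
  choose c hc using hch
  refine ⟨c, ?_⟩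
  have : (fun t => Mᵀ (c t)) = fun t => (e t).1 := funext hc
  rw [this]
  exact hli.comp e e.injective

lemma exists_det_ne_zero {n m k : ℕ} (G : Matrix (Fin n) (Fin m) ℝ) (hG : G.rank = k) :
    ∃ (r : Fin k → Fin n) (c : Fin k → Fin m), (G.submatrix r c).det ≠ 0 := by
  obtain ⟨c, hc⟩ := exists_li_cols G hG
  set H : Matrix (Fin n) (Fin k) ℝ := G.submatrix id c with hH
  have hrankH : H.rank = k := by
    rw [Matrix.rank_eq_finrank_span_cols]
    have h2 : H.col = fun t => Gᵀ (c t) := rfl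
    rw [h2, finrank_span_eq_card hc, Fintype.card_fin]
  have hrankHt : Hᵀ.rank = k := by rw [Matrix.rank_transpose]; exact hrankH
  obtain ⟨r, hr⟩ := exists_li_cols Hᵀ hrankHt
  refine ⟨r, c, ?_⟩
  have hli : LinearIndependent ℝ (fun t => (G.submatrix r c) t) := hr
  have := Matrix.linearIndependent_rows_iff_isUnit.mp hli
  exact ((Matrix.isUnit_iff_isUnit_det _).mp this).ne_zero

lemma numeric_bound {N M K T : ℝ} (hN : 1 ≤ N) (hM : 1 ≤ M) (hK : 1 ≤ K) (hT : 2 ≤ T) :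
    T + N * M * T ≤ (N * M * K) ^ 2 * (T * T) := by
  have hP : (1:ℝ) ≤ N * M := by nlinarith
  have hPK : (1:ℝ) ≤ N * M * K := by nlinarith
  have h1 : N * M ≤ (N * M * K) ^ 2 := by
    calc N * M ≤ N * M * K := le_mul_of_one_le_right (by linarith) hK
      _ ≤ (N * M * K) ^ 2 := le_self_pow₀ hPK two_ne_zero
  have h2 : 2 * T ≤ T * T := by nlinarith
  calc T + N * M * T ≤ N * M * T + N * M * T := by nlinarith
    _ = N * M * (2 * T) := by ring
    _ ≤ (N * M * K) ^ 2 * (T * T) := mul_le_mul h1 h2 (by linarith) (by positivity)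

/-- **Constant-factor solutions admit bounded factorizations.**  For every even `p ≥ 2`
there is `C_p > 0` such that for every matrix `A` with entries of magnitude at most `2^B`
and every rank-`k` matrix `G` with `‖A − G‖_p^p ≤ ‖A‖_p^p`, there is a factorization
`G = XYᵀ` whose factors have entries of magnitude at most `(nmk)^{C_p}·2^{C_p·B}`. -/
theorem bounded_factorization (p : ℕ) (hpe : Even p) (hp : 2 ≤ p) :
    ∃ C : ℝ, 0 < C ∧
      ∀ (n m k B : ℕ), 1 ≤ n → 1 ≤ m → 1 ≤ k → 1 ≤ B →
      ∀ A G : Matrix (Fin n) (Fin m) ℝ,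
        (∀ i j, |A i j| ≤ 2 ^ B) →
        G.rank = k →
        lpPow p (A - G) ≤ lpPow p A →
        ∃ (X : Matrix (Fin n) (Fin k) ℝ) (Y : Matrix (Fin m) (Fin k) ℝ),
          G = X * Yᵀ ∧
          (∀ i j, |X i j| ≤ ((n * m * k : ℕ) : ℝ) ^ C * (2 : ℝ) ^ (C * (B : ℝ))) ∧
          (∀ i j, |Y i j| ≤ ((n * m * k : ℕ) : ℝ) ^ C * (2 : ℝ) ^ (C * (B : ℝ))) := by
  refine ⟨2, by norm_num, ?_⟩
  intro n m k B hn hm hk hB A G hA hrank hlp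
  haveI : Nonempty (Fin n) := Fin.pos_iff_nonempty.mp (by omega)
  haveI : Nonempty (Fin m) := Fin.pos_iff_nonempty.mp (by omega)
  haveI : Nonempty (Fin k) := Fin.pos_iff_nonempty.mp (by omega)
  -- entrywise bound on G
  have hMG : ∀ i j, |G i j| ≤ 2 ^ B + (n : ℝ) * (m : ℝ) * 2 ^ B := by
    have hlpA : lpPow p A ≤ (n : ℝ) * (m : ℝ) * ((2:ℝ) ^ B) ^ p := by
      unfold lpPow
      calc ∑ i, ∑ j, |A i j| ^ p ≤ ∑ _i : Fin n, ∑ _j : Fin m, ((2:ℝ) ^ B) ^ p := by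
            refine Finset.sum_le_sum fun i _ => Finset.sum_le_sum fun j _ => ?_
            exact pow_le_pow_left₀ (abs_nonneg _) (hA i j) p
        _ = (n : ℝ) * (m : ℝ) * ((2:ℝ) ^ B) ^ p := by
            simp [Finset.sum_const, mul_assoc]
    intro i j
    have hterm : |(A - G) i j| ^ p ≤ lpPow p (A - G) := by
      unfold lpPow
      calc |(A - G) i j| ^ p ≤ ∑ j', |(A - G) i j'| ^ p :=
            Finset.single_le_sum (f := fun j' => |(A - G) i j'| ^ p)
              (fun _ _ => by positivity) (Finset.mem_univ j)
        _ ≤ ∑ i', ∑ j', |(A - G) i' j'| ^ p :=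
            Finset.single_le_sum (f := fun i' => ∑ j', |(A - G) i' j'| ^ p)
              (fun _ _ => Finset.sum_nonneg fun _ _ => by positivity) (Finset.mem_univ i)
    have h1 : |(A - G) i j| ^ p ≤ ((n : ℝ) * (m : ℝ) * 2 ^ B) ^ p := by
      calc |(A - G) i j| ^ p ≤ (n : ℝ) * (m : ℝ) * ((2:ℝ) ^ B) ^ p :=
            le_trans hterm (le_trans hlp hlpA)
        _ ≤ ((n : ℝ) * (m : ℝ)) ^ p * ((2:ℝ) ^ B) ^ p := by
            have hn1 : (1:ℝ) ≤ (n:ℝ) := by exact_mod_cast hn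
            have hm1 : (1:ℝ) ≤ (m:ℝ) := by exact_mod_cast hm
            have h11 : (1:ℝ) ≤ (n : ℝ) * (m : ℝ) := by nlinarith
            have := le_self_pow₀ h11 (by omega : p ≠ 0)
            have hp2 : (0:ℝ) ≤ ((2:ℝ) ^ B) ^ p := by positivity
            nlinarith
        _ = ((n : ℝ) * (m : ℝ) * 2 ^ B) ^ p := by ring
    have h2 : |(A - G) i j| ≤ (n : ℝ) * (m : ℝ) * 2 ^ B := by
      have hnm : (0:ℝ) ≤ (n : ℝ) * (m : ℝ) * 2 ^ B := by positivity
      exact le_of_pow_le_pow_left₀ (by omega) hnm h1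
    have h3 : |G i j| ≤ |A i j| + |(A - G) i j| := by
      have : G i j = A i j - (A - G) i j := by simp
      rw [this]
      exact abs_sub _ _
    calc |G i j| ≤ |A i j| + |(A - G) i j| := h3
      _ ≤ 2 ^ B + (n : ℝ) * (m : ℝ) * 2 ^ B := add_le_add (hA i j) h2
  -- maximal-volume submatrix
  obtain ⟨r0, c0, hd0⟩ := exists_det_ne_zero G hrank
  obtain ⟨⟨r, c⟩, hmax⟩ := Finite.exists_max
    (fun rc : (Fin k → Fin n) × (Fin k → Fin m) => |(G.submatrix rc.1 rc.2).det|)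
  set S : Matrix (Fin k) (Fin k) ℝ := G.submatrix r c with hS
  have hdS : S.det ≠ 0 := by
    intro h
    apply hd0
    have := hmax (r0, c0)
    change _ ≤ |S.det| at this
    rw [h, abs_zero] at this
    exact abs_eq_zero.mp (le_antisymm this (abs_nonneg _))
  have hU : IsUnit S := (Matrix.isUnit_iff_isUnit_det S).mpr hdS.isUnit
  -- columns indexed by c are linearly independent and span the column space
  have hliS : LinearIndependent ℝ (fun t => Sᵀ t) :=
    Matrix.linearIndependent_cols_iff_isUnit.mpr hU
  have hlic : LinearIndependent ℝ (fun s => Gᵀ (c s)) := by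
    apply LinearIndependent.of_comp (LinearMap.funLeft ℝ ℝ r)
    exact hliS
  have hspan : ∀ j, Gᵀ j ∈ Submodule.span ℝ (Set.range fun s => Gᵀ (c s)) := by
    intro j
    have h1 : Submodule.span ℝ (Set.range fun s => Gᵀ (c s)) ≤
        Submodule.span ℝ (Set.range Gᵀ) :=
      Submodule.span_mono (by rintro _ ⟨s, rfl⟩; exact ⟨c s, rfl⟩)
    have h2 : Module.finrank ℝ (Submodule.span ℝ (Set.range fun s => Gᵀ (c s))) = k := by
      rw [finrank_span_eq_card hlic, Fintype.card_fin]
    have h3 : Module.finrank ℝ (Submodule.span ℝ (Set.range Gᵀ)) = k := by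
      change Module.finrank ℝ (Submodule.span ℝ (Set.range G.col)) = k
      rw [← Matrix.rank_eq_finrank_span_cols, hrank]
    have heq := Submodule.eq_of_le_of_finrank_le h1 (by rw [h2, h3])
    rw [heq]
    exact Submodule.subset_span ⟨j, rfl⟩
  have hcoef : ∀ j, ∃ a : Fin k → ℝ, ∑ s, a s • Gᵀ (c s) = Gᵀ j := by
    intro j
    exact (Submodule.mem_span_range_iff_exists_fun ℝ).mp (hspan j)
  choose a ha using hcoef
  have haG : ∀ j i, ∑ s, a j s * G i (c s) = G i j := by
    intro j i
    have := congrFun (ha j) i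
    simpa [Finset.sum_apply] using this
  set X : Matrix (Fin n) (Fin k) ℝ := G.submatrix id c with hX
  set Y : Matrix (Fin m) (Fin k) ℝ := fun j s => a j s with hY
  have hfact : G = X * Yᵀ := by
    ext i j
    rw [Matrix.mul_apply]
    simp only [hX, hY, Matrix.submatrix_apply, Matrix.transpose_apply, id_eq]
    rw [← haG j i]
    exact Finset.sum_congr rfl fun s _ => mul_comm _ _
  -- bound on Y via Cramer's rule and maximality
  have hYb : ∀ j s, |Y j s| ≤ 1 := by
    intro j s
    set v : Fin k → ℝ := fun i => G (r i) j with hv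
    have hSv : S *ᵥ (a j) = v := by
      ext i
      simp only [Matrix.mulVec, dotProduct, hS, Matrix.submatrix_apply, hv]
      rw [← haG j (r i)]
      exact Finset.sum_congr rfl fun s _ => mul_comm _ _
    have hcr : S.det • (a j) = Matrix.cramer S v := by
      rw [← hSv, Matrix.cramer_eq_adjugate_mulVec, Matrix.mulVec_mulVec, Matrix.adjugate_mul,
        Matrix.smul_mulVec, Matrix.one_mulVec]
    have h2 : S.det * a j s = (S.updateCol s v).det := by
      have := congrFun hcr s
      simpa [Matrix.cramer_apply] using this
    have h3 : S.updateCol s v = G.submatrix r (Function.update c s j) := by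
      ext i u
      by_cases h : u = s <;>
        simp [Matrix.updateCol_apply, Function.update_apply, h, hv, hS,
          Matrix.submatrix_apply]
    have h4 : |(S.updateCol s v).det| ≤ |S.det| := by
      rw [h3]
      exact hmax (r, Function.update c s j)
    have h5 : |S.det| * |a j s| ≤ |S.det| * 1 := by
      rw [← abs_mul, h2, mul_one]
      exact h4
    exact le_of_mul_le_mul_left h5 (abs_pos.mpr hdS)
  -- final numeric bounds
  have hRHS : ((n * m * k : ℕ) : ℝ) ^ (2:ℝ) * (2 : ℝ) ^ ((2:ℝ) * (B : ℝ)) =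
      ((n * m * k : ℕ) : ℝ) ^ (2:ℕ) * (2 : ℝ) ^ (2 * B : ℕ) := by
    rw [show ((2:ℝ) * (B:ℝ)) = ((2 * B : ℕ) : ℝ) by push_cast; ring,
      Real.rpow_natCast, show (2:ℝ) = ((2:ℕ):ℝ) by norm_num, Real.rpow_natCast]
  have hbig : (2:ℝ) ^ B + (n : ℝ) * (m : ℝ) * 2 ^ B ≤
      ((n * m * k : ℕ) : ℝ) ^ (2:ℕ) * (2 : ℝ) ^ (2 * B : ℕ) := by
    have hn' : (1:ℝ) ≤ (n:ℝ) := by exact_mod_cast hn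
    have hm' : (1:ℝ) ≤ (m:ℝ) := by exact_mod_cast hm
    have hk' : (1:ℝ) ≤ (k:ℝ) := by exact_mod_cast hk
    have hT : (2:ℝ) ≤ 2 ^ B := by
      calc (2:ℝ) = 2 ^ 1 := (pow_one 2).symm
        _ ≤ 2 ^ B := pow_le_pow_right₀ (by norm_num) hB
    have hcast : ((n * m * k : ℕ) : ℝ) = (n:ℝ) * (m:ℝ) * (k:ℝ) := by push_cast; ring
    rw [hcast, show (2:ℝ) ^ (2 * B) = 2 ^ B * 2 ^ B by rw [two_mul, pow_add]]
    exact numeric_bound hn' hm' hk' hT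
  have hone : (1:ℝ) ≤ ((n * m * k : ℕ) : ℝ) ^ (2:ℕ) * (2 : ℝ) ^ (2 * B : ℕ) := by
    have h1 : (1:ℝ) ≤ ((n * m * k : ℕ) : ℝ) := by
      have h0 : 1 * 1 * 1 ≤ n * m * k := Nat.mul_le_mul (Nat.mul_le_mul hn hm) hk
      exact_mod_cast h0
    have h2 : (1:ℝ) ≤ (2:ℝ) ^ (2 * B : ℕ) := one_le_pow₀ (by norm_num)
    calc (1:ℝ) = 1 * 1 := (one_mul 1).symm
      _ ≤ ((n * m * k : ℕ) : ℝ) ^ (2:ℕ) * (2 : ℝ) ^ (2 * B : ℕ) :=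
          mul_le_mul (one_le_pow₀ h1) h2 (by norm_num) (by positivity)
  refine ⟨X, Y, hfact, ?_, ?_⟩
  · intro i j
    rw [hRHS]
    calc |X i j| = |G i (c j)| := rfl
      _ ≤ 2 ^ B + (n : ℝ) * (m : ℝ) * 2 ^ B := hMG i (c j)
      _ ≤ _ := hbig
  · intro i j
    rw [hRHS]
    exact le_trans (hYb i j) hone
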